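/- (Corollary 1) Let N ≥ 2 and let A(t) = (a_{ij}(t)), t ≥ 0, be a family of irreducible symmetric N×N matrices satisfying Condition A2 whose largest nonzero eigenvalue λ_2(t) satisfies λ_2(t) ≤ λ < 0 for all t. Let Γ = diag(γ_1,…,γ_n) be positive definite and suppose f ∈ QUAD(Δ,ϖ) with ϖ > 0. Let α > 0 and let x_1,…,x_N : [0,∞) → ℝ^n and c : [0,∞) → ℝ be differentiable functions satisfying, for all t ≥ 0, ẋ_i(t) = f(x_i(t),t) + c(t) Σ_{j≠i} a_{ij}(t) Γ (x_j(t) − x_i(t)), ċ(t) = −(α/2) Σ_{i,j} a_{ij}(t) x_i(t)^T Γ x_j(t), and c(0) = 0. Then ‖x_i(t) − x_j(t)‖ → 0 as t → ∞ for all i, j, and c(t) converges to a finite limit. -/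

import Mathlib

open Matrix Filter

set_option maxHeartbeats 1000000

/-- Corollary 1: A(t), t ≥ 0, is a family of irreducible symmetric
matrices satisfying Condition A2 with largest nonzero eigenvalue λ₂(t) ≤ λ < 0
(expressed variationally on the orthogonal complement of the all-ones vector).
With Γ = diag(γ) > 0, f ∈ QUAD(Δ,ϖ), and the adaptive scheme
ẋᵢ = f(xᵢ,t) + c(t) Σ_{j≠i} a_{ij}(t) Γ(xⱼ − xᵢ),
ċ = −(α/2) Σᵢⱼ a_{ij}(t) xᵢᵀΓxⱼ, c(0) = 0,
then ‖xᵢ(t) − xⱼ(t)‖ → 0 for all i,j and c(t) converges to a finite limit. -/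
theorem aux_mono_tendsto (f : ℝ → ℝ) (hmono : MonotoneOn f (Set.Ici (0:ℝ)))
    (C : ℝ) (hC : ∀ t ≥ (0:ℝ), f t ≤ C) : ∃ L, Filter.Tendsto f Filter.atTop (nhds L) := by
  set g : ℝ → ℝ := fun t => f (max t 0) with hg
  have hgm : Monotone g := fun s t hst => hmono (Set.mem_Ici.2 (le_max_right _ _))
    (Set.mem_Ici.2 (le_max_right _ _)) (max_le_max hst le_rfl)
  have hbdd : BddAbove (Set.range g) := ⟨C, by rintro _ ⟨t, rfl⟩; exact hC _ (le_max_right _ _)⟩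
  refine ⟨⨆ t, g t, (tendsto_atTop_ciSup hgm hbdd).congr' ?_⟩
  filter_upwards [Filter.eventually_ge_atTop (0:ℝ)] with t ht
  simp [hg, max_eq_left ht]

theorem stmt15 (N n : ℕ) (hN : 2 ≤ N) (A : ℝ → Matrix (Fin N) (Fin N) ℝ)
    (hsym : ∀ t : ℝ, 0 ≤ t → ∀ i j, A t i j = A t j i)
    (hoff : ∀ t : ℝ, 0 ≤ t → ∀ i j, i ≠ j → 0 ≤ A t i j)
    (hdiag : ∀ t : ℝ, 0 ≤ t → ∀ i, A t i i = -∑ j ∈ Finset.univ.erase i, A t i j)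
    (hirr : ∀ t : ℝ, 0 ≤ t → ∀ S : Finset (Fin N), S.Nonempty → S ≠ Finset.univ →
      ∃ i ∈ S, ∃ j, j ∉ S ∧ A t i j ≠ 0)
    (lam : ℝ) (hlam : lam < 0)
    (hspec : ∀ t : ℝ, 0 ≤ t → ∀ v : Fin N → ℝ, (∑ i, v i) = 0 →
      v ⬝ᵥ (A t).mulVec v ≤ lam * ∑ i, (v i) ^ 2)
    (γ : Fin n → ℝ) (hγ : ∀ k, 0 < γ k)
    (δ : Fin n → ℝ) (ϖ : ℝ) (hϖ : 0 < ϖ)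
    (f : (Fin n → ℝ) → ℝ → (Fin n → ℝ))
    (hf : Continuous fun p : (Fin n → ℝ) × ℝ => f p.1 p.2)
    (hQUAD : ∀ x y : Fin n → ℝ, ∀ t : ℝ, 0 ≤ t →
      (∑ k, (x k - y k) * (f x t k - f y t k)) - (∑ k, δ k * (x k - y k) ^ 2)
        ≤ -ϖ * ∑ k, (x k - y k) ^ 2)
    (α : ℝ) (hα : 0 < α)
    (x : Fin N → ℝ → (Fin n → ℝ)) (c : ℝ → ℝ) (hc0 : c 0 = 0)
    (hODE : ∀ i, ∀ t : ℝ, 0 ≤ t →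
      HasDerivAt (x i)
        (fun k => f (x i t) t k
          + c t * ∑ j ∈ Finset.univ.erase i, A t i j * (γ k * (x j t k - x i t k))) t)
    (hcODE : ∀ t : ℝ, 0 ≤ t →
      HasDerivAt c (-(α / 2) * ∑ i, ∑ j, A t i j * ∑ k, x i t k * γ k * x j t k) t) :
    (∀ i j, Tendsto (fun t => ‖x i t - x j t‖) atTop (nhds 0)) ∧
    ∃ c₀ : ℝ, Tendsto c atTop (nhds c₀) := by
  obtain ⟨gm, hgm0, hgmle⟩ : ∃ g : ℝ, 0 < g ∧ ∀ k, g ≤ γ k := by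
    rcases Nat.eq_zero_or_pos n with h | h
    · exact ⟨1, one_pos, fun k => absurd k.isLt (by omega)⟩
    · obtain ⟨k0, -, hk0⟩ := Finset.exists_min_image Finset.univ γ ⟨⟨0, h⟩, Finset.mem_univ _⟩
      exact ⟨γ k0, hγ k0, fun k => hk0 k (Finset.mem_univ k)⟩
  obtain ⟨dm, hdmle⟩ : ∃ d : ℝ, ∀ k, δ k ≤ d := by
    rcases Nat.eq_zero_or_pos n with h | h
    · exact ⟨0, fun k => absurd k.isLt (by omega)⟩
    · obtain ⟨k0, -, hk0⟩ := Finset.exists_max_image Finset.univ δ ⟨⟨0, h⟩, Finset.mem_univ _⟩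
      exact ⟨δ k0, fun k => hk0 k (Finset.mem_univ k)⟩
  have hNne : (N:ℝ) ≠ 0 := Nat.cast_ne_zero.2 (by omega)
  set b : Fin n → ℝ → ℝ := fun k t => (∑ j, x j t k) / (N:ℝ) with hbdef
  have hrow : ∀ t, 0 ≤ t → ∀ i, (∑ j, A t i j) = 0 := by
    intro t ht i
    rw [← Finset.add_sum_erase _ _ (Finset.mem_univ i), hdiag t ht i, neg_add_cancel]
  have hcol : ∀ t, 0 ≤ t → ∀ j, (∑ i, A t i j) = 0 := by
    intro t ht j
    rw [Finset.sum_congr rfl fun i _ => hsym t ht i j]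
    exact hrow t ht j
  have hsum0 : ∀ t, ∀ k : Fin n, (∑ i, (x i t k - b k t)) = 0 := by
    intro t k
    rw [Finset.sum_sub_distrib, Finset.sum_const, Finset.card_univ, Fintype.card_fin]
    simp only [hbdef]
    rw [nsmul_eq_mul]
    field_simp
    ring
  have hAx : ∀ t, 0 ≤ t → ∀ i k, (∑ j, A t i j * x j t k) = ∑ j, A t i j * (x j t k - b k t) := by
    intro t ht i k
    rw [eq_comm, ← sub_eq_zero, ← Finset.sum_sub_distrib]
    have : ∀ j, A t i j * (x j t k - b k t) - A t i j * x j t k = (-(b k t)) * A t i j := fun j => by ring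
    rw [Finset.sum_congr rfl fun j _ => this j, ← Finset.mul_sum, hrow t ht i, mul_zero]
  set p : Fin n → ℝ → ℝ := fun k t => ∑ i, (x i t k - b k t) * ∑ j, A t i j * (x j t k - b k t)
    with hpdef
  set Q : ℝ → ℝ := fun t => ∑ i, ∑ j, A t i j * ∑ k, x i t k * γ k * x j t k with hQdef
  -- coupling identity per k : ∑ i, y_ik * (∑ j, a_ij x_jk) = p k t
  have hcoup : ∀ t, 0 ≤ t → ∀ k, (∑ i, (x i t k - b k t) * ∑ j, A t i j * x j t k) = p k t := by
    intro t ht k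
    simp only [hpdef]
    exact Finset.sum_congr rfl fun i _ => by rw [hAx t ht i k]
  -- ∑_i ∑_j a_ij y_jk = 0
  have hAy0 : ∀ t, 0 ≤ t → ∀ k, (∑ i, ∑ j, A t i j * (x j t k - b k t)) = 0 := by
    intro t ht k
    rw [Finset.sum_comm]
    refine Finset.sum_eq_zero fun j _ => ?_
    rw [← Finset.sum_mul, hcol t ht j, zero_mul]
  have hxp : ∀ t, 0 ≤ t → ∀ k, (∑ i, x i t k * ∑ j, A t i j * x j t k) = p k t := by
    intro t ht k
    have h1 : (∑ i, x i t k * ∑ j, A t i j * x j t k)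
        = ∑ i, x i t k * ∑ j, A t i j * (x j t k - b k t) :=
      Finset.sum_congr rfl fun i _ => by rw [hAx t ht i k]
    have h2 : (∑ i, x i t k * ∑ j, A t i j * (x j t k - b k t)) - p k t
        = b k t * ∑ i, ∑ j, A t i j * (x j t k - b k t) := by
      simp only [hpdef]
      rw [← Finset.sum_sub_distrib, Finset.mul_sum]
      exact Finset.sum_congr rfl fun i _ => by ring
    have h3 := hAy0 t ht k
    rw [h3, mul_zero, sub_eq_zero] at h2
    rw [h1, h2]
  have hQp : ∀ t, 0 ≤ t → Q t = ∑ k, γ k * p k t := by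
    intro t ht
    simp only [hQdef]
    calc (∑ i, ∑ j, A t i j * ∑ k, x i t k * γ k * x j t k)
        = ∑ i, ∑ j, ∑ k, γ k * (x i t k * (A t i j * x j t k)) :=
          Finset.sum_congr rfl fun i _ => Finset.sum_congr rfl fun j _ => by
            rw [Finset.mul_sum]; exact Finset.sum_congr rfl fun k _ => by ring
      _ = ∑ i, ∑ k, ∑ j, γ k * (x i t k * (A t i j * x j t k)) :=
          Finset.sum_congr rfl fun i _ => Finset.sum_comm
      _ = ∑ k, ∑ i, ∑ j, γ k * (x i t k * (A t i j * x j t k)) := Finset.sum_comm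
      _ = ∑ k, γ k * (∑ i, x i t k * ∑ j, A t i j * x j t k) := by
          refine Finset.sum_congr rfl fun k _ => ?_
          simp only [Finset.mul_sum]
      _ = ∑ k, γ k * p k t := Finset.sum_congr rfl fun k _ => by rw [hxp t ht k]
  set D : ℝ → ℝ := fun t => ∑ i, ∑ k, (x i t k - b k t)^2 with hDdef
  have hD0 : ∀ t, 0 ≤ D t := by
    intro t
    simp only [hDdef]
    positivity
  have hpspec : ∀ t, 0 ≤ t → ∀ k, p k t ≤ lam * ∑ i, (x i t k - b k t)^2 := by
    intro t ht k
    have := hspec t ht (fun i => x i t k - b k t) (hsum0 t k)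
    simpa [Matrix.mulVec, dotProduct, hpdef] using this
  have hQle : ∀ t, 0 ≤ t → Q t ≤ lam * gm * D t := by
    intro t ht
    rw [hQp t ht]
    have hstep : ∀ k : Fin n, γ k * p k t ≤ gm * (lam * ∑ i, (x i t k - b k t)^2) := by
      intro k
      have h1 : γ k * p k t ≤ γ k * (lam * ∑ i, (x i t k - b k t)^2) :=
        mul_le_mul_of_nonneg_left (hpspec t ht k) (le_of_lt (hγ k))
      have h2 : lam * ∑ i, (x i t k - b k t)^2 ≤ 0 := by
        have : (0:ℝ) ≤ ∑ i, (x i t k - b k t)^2 := by positivity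
        exact mul_nonpos_of_nonpos_of_nonneg (le_of_lt hlam) this
      nlinarith [hgmle k]
    calc (∑ k, γ k * p k t) ≤ ∑ k, gm * (lam * ∑ i, (x i t k - b k t)^2) :=
          Finset.sum_le_sum fun k _ => hstep k
      _ = lam * gm * D t := by
          simp only [hDdef, Finset.mul_sum]
          rw [Finset.sum_comm]
          exact Finset.sum_congr rfl fun k _ => Finset.sum_congr rfl fun i _ => by ring
  have hQ0 : ∀ t, 0 ≤ t → Q t ≤ 0 := by
    intro t ht
    refine le_trans (hQle t ht) ?_
    exact mul_nonpos_of_nonpos_of_nonneg (mul_neg_of_neg_of_pos hlam hgm0).le (hD0 t)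
  set u : Fin N → ℝ → Fin n → ℝ :=
    fun i t k => f (x i t) t k + c t * (γ k * ∑ j, A t i j * x j t k) with hudef
  have hx : ∀ i k (t:ℝ), 0 ≤ t → HasDerivAt (fun s => x i s k) (u i t k) t := by
    intro i k t ht
    have h0 := hasDerivAt_pi.1 (hODE i t ht) k
    have herase : (∑ j ∈ Finset.univ.erase i, A t i j) = - A t i i := by
      rw [hdiag t ht i, neg_neg]
    have h1 : ∑ j ∈ Finset.univ.erase i, A t i j * (γ k * (x j t k - x i t k))
        = γ k * (∑ j ∈ Finset.univ.erase i, A t i j * x j t k)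
          - γ k * x i t k * (∑ j ∈ Finset.univ.erase i, A t i j) := by
      rw [Finset.mul_sum, Finset.mul_sum, ← Finset.sum_sub_distrib]
      exact Finset.sum_congr rfl fun j _ => by ring
    have h2 : (∑ j ∈ Finset.univ.erase i, A t i j * x j t k)
        = (∑ j, A t i j * x j t k) - A t i i * x i t k := by
      rw [eq_sub_iff_add_eq, Finset.sum_erase_add _ _ (Finset.mem_univ i)]
    convert h0 using 1
    · rfl
    show f (x i t) t k + c t * (γ k * ∑ j, A t i j * x j t k) = _
    rw [h1, h2, herase]
    ring
    · rfl
  have hbderiv : ∀ k (t:ℝ), 0 ≤ t → HasDerivAt (fun s => b k s) ((∑ j, u j t k)/(N:ℝ)) t := by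
    intro k t ht
    have h : HasDerivAt (fun s => ∑ j, x j s k) (∑ j, u j t k) t :=
      HasDerivAt.fun_sum fun j _ => hx j k t ht
    exact h.div_const (N:ℝ)
  have hDderiv : ∀ (t:ℝ), 0 ≤ t →
      HasDerivAt D (∑ i, ∑ k, 2*(x i t k - b k t)*(u i t k - (∑ j, u j t k)/(N:ℝ))) t := by
    intro t ht
    refine HasDerivAt.fun_sum fun i _ => HasDerivAt.fun_sum fun k _ => ?_
    have h := ((hx i k t ht).fun_sub (hbderiv k t ht)).fun_pow 2
    convert h using 1
    · rfl
    push_cast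
    ring
  set S : ℝ → ℝ := fun t => ∑ i, ∑ k,
    (x i t k - b k t) * (f (x i t) t k - f (fun k' => b k' t) t k) with hSdef
  have hkey : ∀ (t:ℝ), 0 ≤ t →
      (∑ i, ∑ k, 2*(x i t k - b k t)*(u i t k - (∑ j, u j t k)/(N:ℝ)))
        = 2 * S t + 2 * c t * Q t := by
    intro t ht
    have split : (∑ i, ∑ k, 2*(x i t k - b k t)*(u i t k - (∑ j, u j t k)/(N:ℝ)))
        = ∑ i, ∑ k, 2*(x i t k - b k t)*(u i t k) := by
      rw [← sub_eq_zero, ← Finset.sum_sub_distrib]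
      have h1 : ∀ i : Fin N, ((∑ k, 2*(x i t k - b k t)*(u i t k - (∑ j, u j t k)/(N:ℝ)))
          - ∑ k, 2*(x i t k - b k t)*(u i t k))
          = ∑ k, (-(2*((∑ j, u j t k)/(N:ℝ)))) * (x i t k - b k t) := by
        intro i
        rw [← Finset.sum_sub_distrib]
        exact Finset.sum_congr rfl fun k _ => by ring
      rw [Finset.sum_congr rfl fun i _ => h1 i, Finset.sum_comm]
      refine Finset.sum_eq_zero fun k _ => ?_
      rw [← Finset.mul_sum, hsum0 t k, mul_zero]
    rw [split]
    have hper : ∀ i : Fin N, (∑ k, 2*(x i t k - b k t)*(u i t k))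
        = (∑ k, 2*((x i t k - b k t) * (f (x i t) t k - f (fun k' => b k' t) t k)))
          + ((∑ k, (2 * f (fun k' => b k' t) t k) * (x i t k - b k t))
          + ∑ k, 2 * c t * (γ k * ((x i t k - b k t) * (∑ j, A t i j * x j t k)))) := by
      intro i
      rw [← Finset.sum_add_distrib, ← Finset.sum_add_distrib]
      exact Finset.sum_congr rfl fun k _ => by simp only [hudef]; ring
    rw [Finset.sum_congr rfl fun i _ => hper i, Finset.sum_add_distrib, Finset.sum_add_distrib]
    have e1 : (∑ i, ∑ k, 2*((x i t k - b k t) * (f (x i t) t k - f (fun k' => b k' t) t k)))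
        = 2 * S t := by
      simp only [hSdef, Finset.mul_sum]
    have e2 : (∑ i, ∑ k, (2 * f (fun k' => b k' t) t k) * (x i t k - b k t)) = 0 := by
      rw [Finset.sum_comm]
      refine Finset.sum_eq_zero fun k _ => ?_
      rw [← Finset.mul_sum, hsum0 t k, mul_zero]
    have e3 : (∑ i, ∑ k, 2 * c t * (γ k * ((x i t k - b k t) * (∑ j, A t i j * x j t k))))
        = 2 * c t * Q t := by
      rw [hQp t ht, Finset.sum_comm, Finset.mul_sum]
      refine Finset.sum_congr rfl fun k _ => ?_
      rw [← hcoup t ht k]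
      simp only [Finset.mul_sum]
    rw [e1, e2, e3]
    ring
  have hSle : ∀ (t:ℝ), 0 ≤ t → S t ≤ (dm - ϖ) * D t := by
    intro t ht
    have hper : ∀ i : Fin N, (∑ k, (x i t k - b k t) * (f (x i t) t k - f (fun k' => b k' t) t k))
        ≤ (dm - ϖ) * ∑ k, (x i t k - b k t)^2 := by
      intro i
      have h1 := hQUAD (x i t) (fun k' => b k' t) t ht
      have h2 : (∑ k, δ k * (x i t k - b k t) ^ 2) ≤ ∑ k, dm * (x i t k - b k t)^2 :=
        Finset.sum_le_sum fun k _ => mul_le_mul_of_nonneg_right (hdmle k) (sq_nonneg _)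
      have h3 : (∑ k, dm * (x i t k - b k t)^2) = dm * ∑ k, (x i t k - b k t)^2 := by
        rw [Finset.mul_sum]
      nlinarith [h1, h2]
    calc S t ≤ ∑ i, (dm - ϖ) * ∑ k, (x i t k - b k t)^2 := by
          simp only [hSdef]
          exact Finset.sum_le_sum fun i _ => hper i
      _ = (dm - ϖ) * D t := by simp only [hDdef, Finset.mul_sum]
  have hcd : ∀ t:ℝ, 0 ≤ t → HasDerivAt c (-(α/2) * Q t) t := fun t ht => by
    simpa only [hQdef] using hcODE t ht
  have hccont : ContinuousOn c (Set.Ici (0:ℝ)) :=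
    fun s hs => ((hcd s hs).continuousAt).continuousWithinAt
  have hcmono : MonotoneOn c (Set.Ici (0:ℝ)) := by
    refine monotoneOn_of_deriv_nonneg (convex_Ici 0) hccont ?_ ?_
    · intro s hs
      rw [interior_Ici] at hs
      exact ((hcd s (le_of_lt hs)).differentiableAt).differentiableWithinAt
    · intro s hs
      rw [interior_Ici] at hs
      rw [(hcd s hs.le).deriv]
      have := hQ0 s hs.le
      nlinarith
  have hcnn : ∀ t:ℝ, 0 ≤ t → 0 ≤ c t := by
    intro t ht
    have := hcmono Set.self_mem_Ici ht ht
    rwa [hc0] at this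
  set m : ℝ := max 1 ((dm - ϖ + 1) * 2 / (-(lam * gm))) with hmdef
  have hm1 : (1:ℝ) ≤ m := le_max_left _ _
  have hmkey : dm - ϖ + m / 2 * (lam * gm) ≤ -1 := by
    have hP : 0 < -(lam * gm) := by nlinarith
    have h2 : (dm - ϖ + 1) * 2 / (-(lam * gm)) ≤ m := le_max_right _ _
    rw [div_le_iff₀ hP] at h2
    nlinarith
  set V : ℝ → ℝ := fun t => D t / 2 + (c t - m)^2 / (2*α) with hVdef
  set Vd : ℝ → ℝ := fun t => (2*S t + 2*c t*Q t)/2 + (2*(c t - m)*(-(α/2)*Q t))/(2*α) with hVddef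
  have hVderiv : ∀ t:ℝ, 0 ≤ t → HasDerivAt V (Vd t) t := by
    intro t ht
    have h1 : HasDerivAt D (2*S t + 2*c t*Q t) t := by
      have := hDderiv t ht; rwa [hkey t ht] at this
    have h2 : HasDerivAt (fun s => (c s - m)^2 / (2*α)) (2*(c t - m)*(-(α/2)*Q t)/(2*α)) t := by
      have h3 := (((hcd t ht).sub_const m).fun_pow 2).div_const (2*α)
      convert h3 using 1
      · rfl
      · rfl
      push_cast; ring
    simpa only [hVdef, hVddef] using (h1.div_const 2).fun_add h2
  have hVdle : ∀ t:ℝ, 0 ≤ t → Vd t ≤ -(D t) := by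
    intro t ht
    have hS' := hSle t ht
    have hQl := hQle t ht
    have hQ0' := hQ0 t ht
    have hc' := hcnn t ht
    have hD' := hD0 t
    simp only [hVddef]
    have hexp : (2*S t + 2*c t*Q t)/2 + (2*(c t - m)*(-(α/2)*Q t))/(2*α)
        = S t + (c t/2) * Q t + (m/2) * Q t := by
      field_simp
      ring
    rw [hexp]
    have t1 : (c t/2) * Q t ≤ 0 := mul_nonpos_of_nonneg_of_nonpos (by linarith) hQ0'
    have t2 : (m/2) * Q t ≤ (m/2) * (lam * gm * D t) := mul_le_mul_of_nonneg_left hQl (by linarith)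
    nlinarith [mul_nonneg hD' (show (0:ℝ) ≤ -(dm - ϖ + m/2*(lam*gm) + 1) by linarith)]
  have hVcont : ContinuousOn V (Set.Ici (0:ℝ)) :=
    fun s hs => ((hVderiv s hs).continuousAt).continuousWithinAt
  have hVanti : AntitoneOn V (Set.Ici (0:ℝ)) := by
    refine antitoneOn_of_deriv_nonpos (convex_Ici 0) hVcont ?_ ?_
    · intro s hs; rw [interior_Ici] at hs
      exact ((hVderiv s hs.le).differentiableAt).differentiableWithinAt
    · intro s hs; rw [interior_Ici] at hs
      rw [(hVderiv s hs.le).deriv]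
      have h1 := hVdle s hs.le
      have h2 := hD0 s
      linarith
  have hVnn : ∀ t, 0 ≤ V t := by
    intro t
    simp only [hVdef]
    have := hD0 t
    positivity
  have hVle0 : ∀ t:ℝ, 0 ≤ t → V t ≤ V 0 := fun t ht => hVanti Set.self_mem_Ici ht ht
  have hcbd : ∀ t:ℝ, 0 ≤ t → c t ≤ m + Real.sqrt (2*α*V 0) := by
    intro t ht
    have h1 : (c t - m)^2 ≤ 2*α*V 0 := by
      have h2 := hVle0 t ht
      have h4 : (c t - m)^2/(2*α) ≤ V 0 := by
        have h3 := hD0 t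
        have h5 : (c t - m)^2/(2*α) ≤ V t := by
          simp only [hVdef]
          linarith
        exact le_trans h5 h2
      calc (c t - m)^2 = ((c t - m)^2/(2*α)) * (2*α) := by field_simp
        _ ≤ V 0 * (2*α) := mul_le_mul_of_nonneg_right h4 (by linarith)
        _ = 2*α*V 0 := by ring
    have h3 : c t - m ≤ Real.sqrt (2*α*V 0) := by
      calc c t - m ≤ |c t - m| := le_abs_self _
        _ = Real.sqrt ((c t - m)^2) := (Real.sqrt_sq_eq_abs _).symm
        _ ≤ Real.sqrt (2*α*V 0) := Real.sqrt_le_sqrt h1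
    linarith
  have hcconv : ∃ c₀ : ℝ, Filter.Tendsto c Filter.atTop (nhds c₀) :=
    aux_mono_tendsto c hcmono _ (fun t ht => hcbd t ht)
  obtain ⟨LV, hLV⟩ : ∃ L, Filter.Tendsto V Filter.atTop (nhds L) := by
    obtain ⟨L, hL⟩ := aux_mono_tendsto (fun t => -V t)
      (fun s hs t ht hst => neg_le_neg (hVanti hs ht hst)) 0 (fun t ht => by simpa using hVnn t)
    exact ⟨-L, by simpa using hL.neg⟩
  set K : ℝ := max 0 (2*(dm - ϖ)) with hKdef
  have hK0 : (0:ℝ) ≤ K := le_max_left _ _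
  have hDdle : ∀ t:ℝ, 0 ≤ t → 2*S t + 2*c t*Q t ≤ K * D t := by
    intro t ht
    have hS' := hSle t ht
    have t1 : c t * Q t ≤ 0 := mul_nonpos_of_nonneg_of_nonpos (hcnn t ht) (hQ0 t ht)
    have h2 : 2*(dm-ϖ) ≤ K := le_max_right _ _
    have h3 : (2*(dm-ϖ)) * D t ≤ K * D t := mul_le_mul_of_nonneg_right h2 (hD0 t)
    linarith
  set E : ℝ → ℝ := fun t => D t * Real.exp (-(K*t)) with hEdef
  have hEderiv : ∀ t:ℝ, 0 ≤ t →
      HasDerivAt E ((2*S t + 2*c t*Q t) * Real.exp (-(K*t)) + D t * (Real.exp (-(K*t)) * (-K))) t := by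
    intro t ht
    have h1 : HasDerivAt D (2*S t + 2*c t*Q t) t := by
      have := hDderiv t ht
      rwa [hkey t ht] at this
    have hexp : HasDerivAt (fun s => Real.exp (-(K*s))) (Real.exp (-(K*t)) * (-K)) t := by
      have hi : HasDerivAt (fun s : ℝ => -(K*s)) (-K) t := by
        simpa using ((hasDerivAt_id t).const_mul K).fun_neg
      exact (Real.hasDerivAt_exp (-(K*t))).comp t hi
    simpa only [hEdef] using h1.fun_mul hexp
  have hEanti : AntitoneOn E (Set.Ici (0:ℝ)) := by
    refine antitoneOn_of_deriv_nonpos (convex_Ici 0)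
      (fun s hs => ((hEderiv s hs).continuousAt).continuousWithinAt) ?_ ?_
    · intro s hs; rw [interior_Ici] at hs
      exact ((hEderiv s hs.le).differentiableAt).differentiableWithinAt
    · intro s hs; rw [interior_Ici] at hs
      rw [(hEderiv s hs.le).deriv]
      have h1 := hDdle s hs.le
      have h2 := Real.exp_pos (-(K*s))
      have h3 := mul_le_mul_of_nonneg_right h1 h2.le
      linarith [h3]
  have hDbound : ∀ t:ℝ, 1 ≤ t → D t ≤ Real.exp K * (V (t-1) - V t) := by
    intro t ht
    have ht0 : (0:ℝ) ≤ t - 1 := by linarith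
    obtain ⟨ξ, hξ, hslope⟩ := exists_hasDerivAt_eq_slope V Vd (by linarith : t - 1 < t)
      (hVcont.mono (fun s hs => le_trans ht0 hs.1))
      (fun s hs => hVderiv s (by linarith [hs.1]))
    have hone : t - (t-1) = 1 := by ring
    rw [hone, div_one] at hslope
    have hξ0 : (0:ℝ) ≤ ξ := le_trans ht0 hξ.1.le
    have hDξ : D ξ ≤ V (t-1) - V t := by
      have h1 := hVdle ξ hξ0
      rw [hslope] at h1
      linarith
    have hEa : D t * Real.exp (-(K*t)) ≤ D ξ * Real.exp (-(K*ξ)) :=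
      hEanti hξ0 (by linarith : (0:ℝ) ≤ t) hξ.2.le
    have h5 := mul_le_mul_of_nonneg_right hEa (Real.exp_pos (K*t)).le
    rw [mul_assoc, mul_assoc, ← Real.exp_add, ← Real.exp_add, neg_add_cancel, Real.exp_zero,
      mul_one] at h5
    have h6 : D ξ * Real.exp (-(K*ξ)+K*t) ≤ D ξ * Real.exp K :=
      mul_le_mul_of_nonneg_left (Real.exp_le_exp.2 (by nlinarith [hξ.1, hξ.2])) (hD0 ξ)
    have h7 : D ξ * Real.exp K ≤ (V (t-1) - V t) * Real.exp K :=
      mul_le_mul_of_nonneg_right hDξ (Real.exp_pos K).le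
    calc D t ≤ D ξ * Real.exp (-(K*ξ)+K*t) := h5
      _ ≤ D ξ * Real.exp K := h6
      _ ≤ (V (t-1) - V t) * Real.exp K := h7
      _ = Real.exp K * (V (t-1) - V t) := by ring
  have hVt1 : Filter.Tendsto (fun t => V (t-1)) Filter.atTop (nhds LV) := by
    have h1 : Filter.Tendsto (fun t:ℝ => t + (-1)) Filter.atTop Filter.atTop :=
      Filter.tendsto_atTop_add_const_right Filter.atTop (-1) Filter.tendsto_id
    have := hLV.comp h1
    simpa [Function.comp_def, sub_eq_add_neg] using this
  have hdiff0 : Filter.Tendsto (fun t => Real.exp K * (V (t-1) - V t)) Filter.atTop (nhds 0) := by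
    have := ((hVt1.sub hLV).const_mul (Real.exp K))
    simpa using this
  have hDto0 : Filter.Tendsto D Filter.atTop (nhds 0) := by
    refine tendsto_of_tendsto_of_tendsto_of_le_of_le' tendsto_const_nhds hdiff0 ?_ ?_
    · filter_upwards with t using hD0 t
    · filter_upwards [Filter.eventually_ge_atTop (1:ℝ)] with t ht using hDbound t ht
  have hsq : Filter.Tendsto (fun t => Real.sqrt (D t)) Filter.atTop (nhds 0) := by
    have := (Real.continuous_sqrt.tendsto 0).comp hDto0
    simpa [Function.comp_def] using this
  have hfinal : ∀ i j : Fin N, Filter.Tendsto (fun t => ‖x i t - x j t‖) Filter.atTop (nhds 0) := by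
    intro i j
    have hnorm : ∀ t:ℝ, ‖x i t - x j t‖ ≤ 2 * Real.sqrt (D t) := by
      intro t
      have hDt := hD0 t
      rw [pi_norm_le_iff_of_nonneg (by positivity)]
      intro k
      have h1 : ∀ l : Fin N, |x l t k - b k t| ≤ Real.sqrt (D t) := by
        intro l
        rw [← Real.sqrt_sq_eq_abs]
        apply Real.sqrt_le_sqrt
        simp only [hDdef]
        have h2 : (x l t k - b k t)^2 ≤ ∑ k', (x l t k' - b k' t)^2 :=
          Finset.single_le_sum (f := fun k' => (x l t k' - b k' t)^2)
            (fun k' _ => sq_nonneg _) (Finset.mem_univ k)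
        have h3 : (∑ k', (x l t k' - b k' t)^2) ≤ ∑ i', ∑ k', (x i' t k' - b k' t)^2 :=
          Finset.single_le_sum (f := fun i' => ∑ k', (x i' t k' - b k' t)^2)
            (fun i' _ => Finset.sum_nonneg fun k' _ => sq_nonneg _) (Finset.mem_univ l)
        linarith
      have h4 := h1 i
      have h5 := h1 j
      have h6 : ‖(x i t - x j t) k‖ = |x i t k - x j t k| := by simp [Real.norm_eq_abs]
      rw [h6]
      have h7 : |x i t k - x j t k| ≤ |x i t k - b k t| + |x j t k - b k t| := by
        have := abs_sub (x i t k - b k t) (x j t k - b k t)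
        have h8 : x i t k - x j t k = (x i t k - b k t) - (x j t k - b k t) := by ring
        rw [h8]
        exact abs_sub _ _
      linarith
    refine tendsto_of_tendsto_of_tendsto_of_le_of_le tendsto_const_nhds ?_
      (fun t => norm_nonneg _) hnorm
    have := hsq.const_mul (2:ℝ)
    simpa using this
  exact ⟨hfinal, hcconv⟩
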